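/- Fix A > 0 and α ∈ [0, A], and for each integer d ≥ 2 set β_d = 1/d + α/d². Then the ratio (d·p_{≥2}(β_d) − d·p₂(β_d)·(1 − p_{≥2}(β_d))^{d−1}) / (1 − (1 − p_{≥2}(β_d))^d − d·p₂(β_d)·(1 − p_{≥2}(β_d))^{d−1}) converges to 10/7 as d → ∞. In particular, the ratio is at most 2 for all sufficiently large d. -/

import Mathlib

/-- The Poisson(β) probability mass function `p_j(β) = e^{−β} β^j / j!`. -/
noncomputable def poissonProb (β : ℝ) (j : ℕ) : ℝ :=
  Real.exp (-β) * β ^ j / (Nat.factorial j)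

/-- The Poisson(β) tail probability `p_{≥k}(β) = Σ_{j≥k} e^{−β} β^j / j!`. -/
noncomputable def poissonTail (β : ℝ) (k : ℕ) : ℝ :=
  ∑' j : ℕ, if k ≤ j then poissonProb β j else 0

/-- `Σ_{k=1}^d k·P(A'_k) = d·p_{≥2}(β) − d·p₂(β)·(1 − p_{≥2}(β))^{d−1}` (numerator). -/
noncomputable def numA' (α : ℝ) (d : ℕ) : ℝ :=
  (d : ℝ) * poissonTail (1 / (d : ℝ) + α / (d : ℝ) ^ 2) 2
    - (d : ℝ) * poissonProb (1 / (d : ℝ) + α / (d : ℝ) ^ 2) 2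
        * (1 - poissonTail (1 / (d : ℝ) + α / (d : ℝ) ^ 2) 2) ^ (d - 1)

/-- `Σ_{k=1}^d P(A'_k) = 1 − (1 − p_{≥2}(β))^d − d·p₂(β)·(1 − p_{≥2}(β))^{d−1}`
(denominator). -/
noncomputable def denA' (α : ℝ) (d : ℕ) : ℝ :=
  1 - (1 - poissonTail (1 / (d : ℝ) + α / (d : ℝ) ^ 2) 2) ^ d
    - (d : ℝ) * poissonProb (1 / (d : ℝ) + α / (d : ℝ) ^ 2) 2
        * (1 - poissonTail (1 / (d : ℝ) + α / (d : ℝ) ^ 2) 2) ^ (d - 1)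

open Filter Real Topology

lemma exp_tsum (x : ℝ) : Real.exp x = ∑' n : ℕ, x ^ n / n.factorial := by
  rw [Real.exp_eq_exp_ℝ, NormedSpace.exp_eq_tsum_div]

lemma tsum_shift2 (f : ℕ → ℝ) (hf : Summable f) :
    ∑' j, f j = f 0 + f 1 + ∑' j, f (j + 2) := by
  rw [Summable.tsum_eq_zero_add hf, Summable.tsum_eq_zero_add ((summable_nat_add_iff 1).mpr hf)]
  ring

lemma tsum_ite_two (f : ℕ → ℝ) (hf : Summable f) :
    ∑' j, (if 2 ≤ j then f j else 0) = ∑' j, f (j + 2) := by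
  have hg : Summable (fun j => if 2 ≤ j then f j else 0) := by
    have := hf.indicator {j | 2 ≤ j}
    have he : (fun j => if 2 ≤ j then f j else 0) = Set.indicator {j | 2 ≤ j} f := by
      funext j; simp [Set.indicator_apply]
    rw [he]; exact this
  rw [Summable.tsum_eq_zero_add hg, Summable.tsum_eq_zero_add ((summable_nat_add_iff 1).mpr hg)]
  simp

lemma poissonSummable (β : ℝ) : Summable (fun j => poissonProb β j) := by
  have := (Real.summable_pow_div_factorial β).mul_left (Real.exp (-β))
  simpa [poissonProb, mul_div_assoc] using this

lemma poissonTail_two (β : ℝ) :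
    poissonTail β 2 = Real.exp (-β) * (Real.exp β - 1 - β) := by
  have h1 : poissonTail β 2 = ∑' j, poissonProb β (j + 2) :=
    tsum_ite_two _ (poissonSummable β)
  have h2 : ∑' j : ℕ, β ^ j / (Nat.factorial j) =
      1 + β + ∑' j : ℕ, β ^ (j + 2) / (Nat.factorial (j + 2)) := by
    have := tsum_shift2 (fun j => β ^ j / (Nat.factorial j)) (Real.summable_pow_div_factorial β)
    simpa using this
  have h3 : ∑' j : ℕ, β ^ (j + 2) / (Nat.factorial (j + 2)) = Real.exp β - 1 - β := by
    rw [← exp_tsum] at h2; linarith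
  rw [h1, ← h3]
  have : ∀ j : ℕ, poissonProb β (j + 2)
      = Real.exp (-β) * (β ^ (j + 2) / (Nat.factorial (j + 2))) := by
    intro j; simp [poissonProb, mul_div_assoc]
  simp_rw [this]
  rw [tsum_mul_left]

lemma poissonProb_two (β : ℝ) : poissonProb β 2 = Real.exp (-β) * β ^ 2 / 2 := by
  simp [poissonProb]


lemma tendsto_of_bound (f : ℝ → ℝ) (c C : ℝ)
    (h : ∀ x : ℝ, x ≠ 0 → |x| ≤ 1/2 → |f x - c| ≤ C * |x|) :
    Filter.Tendsto f (𝓝[≠] (0:ℝ)) (𝓝 c) := by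
  have hsmall : ∀ᶠ x : ℝ in 𝓝 0, |x| ≤ 1/2 := by
    have := Metric.ball_mem_nhds (0:ℝ) (by norm_num : (0:ℝ) < 1/2)
    filter_upwards [this] with x hx
    rw [Metric.mem_ball, Real.dist_eq, sub_zero] at hx
    linarith
  have ev : ∀ᶠ x in 𝓝[≠] (0:ℝ), ‖f x - c‖ ≤ C * |x| := by
    filter_upwards [eventually_mem_nhdsWithin,
      eventually_nhdsWithin_of_eventually_nhds hsmall] with x hx1 hx2
    exact h x hx1 hx2
  have hC : Filter.Tendsto (fun x : ℝ => C * |x|) (𝓝[≠] (0:ℝ)) (𝓝 0) := by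
    have : Filter.Tendsto (fun x : ℝ => C * |x|) (𝓝 (0:ℝ)) (𝓝 (C * |0|)) :=
      (continuous_const.mul continuous_abs).tendsto 0
    simpa using this.mono_left nhdsWithin_le_nhds
  have h0 := squeeze_zero_norm' ev hC
  have := h0.add_const c
  simpa using this

lemma sum_range_3 (x : ℝ) :
    ∑ m ∈ Finset.range 3, x ^ m / m.factorial = 1 + x + x^2/2 := by
  simp [Finset.sum_range_succ]

lemma sum_range_4 (x : ℝ) :
    ∑ m ∈ Finset.range 4, x ^ m / m.factorial = 1 + x + x^2/2 + x^3/6 := by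
  simp [Finset.sum_range_succ, Nat.factorial]

lemma E1 : Filter.Tendsto (fun x : ℝ => (Real.exp x - 1)/x) (𝓝[≠] (0:ℝ)) (𝓝 1) := by
  apply tendsto_of_bound _ _ 1
  intro x hx hx2
  have hb := Real.exp_bound (x := x) (by linarith [abs_nonneg x]) (n := 2) (by norm_num)
  have hs : ∑ m ∈ Finset.range 2, x ^ m / m.factorial = 1 + x := by
    simp [Finset.sum_range_succ]
  rw [hs] at hb
  have hxa : 0 < |x| := abs_pos.mpr hx
  have heq : (Real.exp x - 1)/x - 1 = (Real.exp x - (1+x))/x := by field_simp; ring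
  rw [heq, abs_div, div_le_iff₀ hxa]
  have hC : ((Nat.succ 2 : ℕ) : ℝ) / ((Nat.factorial 2 : ℕ) * (2:ℕ)) ≤ 1 := by
    norm_num [Nat.factorial]
  calc |Real.exp x - (1+x)| ≤ |x|^2 * ((Nat.succ 2 : ℕ) / ((Nat.factorial 2 : ℕ) * (2:ℕ))) := hb
    _ ≤ |x|^2 * 1 := by
        apply mul_le_mul_of_nonneg_left hC (by positivity)
    _ = 1 * |x| * |x| := by rw [mul_one, sq]; ring
    _ = 1 * |x| * |x| := rfl

lemma E4 : Filter.Tendsto (fun x : ℝ => (Real.exp x - 1 - x)/x^2) (𝓝[≠] (0:ℝ)) (𝓝 (1/2)) := by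
  apply tendsto_of_bound _ _ 1
  intro x hx hx2
  have hb := Real.exp_bound (x := x) (by linarith [abs_nonneg x]) (n := 3) (by norm_num)
  rw [sum_range_3] at hb
  have hx2pos : (0:ℝ) < x^2 := by positivity
  have heq : (Real.exp x - 1 - x)/x^2 - 1/2 = (Real.exp x - (1+x+x^2/2))/x^2 := by
    field_simp; ring
  rw [heq, abs_div, abs_of_pos hx2pos, div_le_iff₀ hx2pos]
  have hC : ((Nat.succ 3 : ℕ) : ℝ) / ((Nat.factorial 3 : ℕ) * (3:ℕ)) ≤ 1 := by
    norm_num [Nat.factorial]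
  calc |Real.exp x - (1+x+x^2/2)|
      ≤ |x|^3 * ((Nat.succ 3 : ℕ) / ((Nat.factorial 3 : ℕ) * (3:ℕ))) := hb
    _ ≤ |x|^3 * 1 := mul_le_mul_of_nonneg_left hC (by positivity)
    _ = 1 * |x| * x^2 := by rw [mul_one, pow_succ', sq_abs]; ring

lemma E5 : Filter.Tendsto (fun x : ℝ => (Real.exp x - 1 - x - x^2/2)/x^3)
    (𝓝[≠] (0:ℝ)) (𝓝 (1/6)) := by
  apply tendsto_of_bound _ _ 1
  intro x hx hx2
  have hb := Real.exp_bound (x := x) (by linarith [abs_nonneg x]) (n := 4) (by norm_num)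
  rw [sum_range_4] at hb
  have hx3ne : x^3 ≠ 0 := pow_ne_zero _ hx
  have hx3 : |x^3| = |x|^3 := by rw [abs_pow]
  have hx3pos : (0:ℝ) < |x|^3 := by positivity
  have heq : (Real.exp x - 1 - x - x^2/2)/x^3 - 1/6 = (Real.exp x - (1+x+x^2/2+x^3/6))/x^3 := by
    field_simp; ring
  rw [heq, abs_div, hx3, div_le_iff₀ hx3pos]
  have hC : ((Nat.succ 4 : ℕ) : ℝ) / ((Nat.factorial 4 : ℕ) * (4:ℕ)) ≤ 1 := by
    norm_num [Nat.factorial]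
  calc |Real.exp x - (1+x+x^2/2+x^3/6)|
      ≤ |x|^4 * ((Nat.succ 4 : ℕ) / ((Nat.factorial 4 : ℕ) * (4:ℕ))) := hb
    _ ≤ |x|^4 * 1 := mul_le_mul_of_nonneg_left hC (by positivity)
    _ = 1 * |x| * |x|^3 := by rw [mul_one, pow_succ']; ring

lemma E2 : Filter.Tendsto (fun x : ℝ => Real.log (1-x)/x) (𝓝[≠] (0:ℝ)) (𝓝 (-1)) := by
  apply tendsto_of_bound _ _ 2
  intro x hx hx2
  have hb := Real.abs_log_sub_add_sum_range_le (x := x) (by linarith [abs_nonneg x]) 1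
  have hs : ∑ i ∈ Finset.range 1, x ^ (i+1) / (i+1) = x := by simp
  rw [hs] at hb
  have hxa : 0 < |x| := abs_pos.mpr hx
  have heq : Real.log (1-x)/x - (-1) = (x + Real.log (1-x))/x := by field_simp; ring
  rw [heq, abs_div, div_le_iff₀ hxa]
  calc |x + Real.log (1-x)| ≤ |x|^(1+1) / (1 - |x|) := hb
    _ ≤ |x|^2 / (1/2) := by
        apply div_le_div_of_nonneg_left (by positivity) (by norm_num) (by linarith)
    _ = 2 * |x| * |x| := by rw [sq]; ring

lemma E3 : Filter.Tendsto (fun x : ℝ => (x + Real.log (1-x))/x^2)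
    (𝓝[≠] (0:ℝ)) (𝓝 (-(1/2))) := by
  apply tendsto_of_bound _ _ 2
  intro x hx hx2
  have hb := Real.abs_log_sub_add_sum_range_le (x := x) (by linarith [abs_nonneg x]) 2
  have hs : ∑ i ∈ Finset.range 2, x ^ (i+1) / (i+1) = x + x^2/2 := by
    simp [Finset.sum_range_succ]; ring
  rw [hs] at hb
  have hx2pos : (0:ℝ) < x^2 := by positivity
  have heq : (x + Real.log (1-x))/x^2 - (-(1/2)) = (x + x^2/2 + Real.log (1-x))/x^2 := by
    field_simp; ring
  rw [heq, abs_div, abs_of_pos hx2pos, div_le_iff₀ hx2pos]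
  have h3 : |x|^(2+1) = |x| * x^2 := by rw [pow_succ', sq_abs]
  calc |x + x^2/2 + Real.log (1-x)| ≤ |x|^(2+1) / (1 - |x|) := hb
    _ ≤ (|x| * x^2) / (1/2) := by
        rw [h3]
        apply div_le_div_of_nonneg_left (by positivity) (by norm_num) (by linarith)
    _ = 2 * |x| * x^2 := by ring

lemma E6 : Filter.Tendsto (fun x : ℝ => (1 - (1+x)*Real.exp (-x))/x^2)
    (𝓝[≠] (0:ℝ)) (𝓝 (1/2)) := by
  have hmain : Filter.Tendsto (fun x : ℝ => Real.exp (-x) * ((Real.exp x - 1 - x)/x^2))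
      (𝓝[≠] (0:ℝ)) (𝓝 (1 * (1/2))) := by
    apply Filter.Tendsto.mul _ E4
    have : Filter.Tendsto (fun x : ℝ => Real.exp (-x)) (𝓝 (0:ℝ)) (𝓝 (Real.exp (-0))) :=
      (Real.continuous_exp.comp continuous_neg).tendsto 0
    simpa using this.mono_left nhdsWithin_le_nhds
  have heq : (fun x : ℝ => Real.exp (-x) * ((Real.exp x - 1 - x)/x^2))
      = fun x : ℝ => (1 - (1+x)*Real.exp (-x))/x^2 := by
    funext x
    have h1 : Real.exp (-x) * Real.exp x = 1 := by
      rw [← Real.exp_add]; simp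
    rw [mul_div_assoc']
    congr 1
    linear_combination h1
  rw [heq] at hmain
  simpa using hmain

noncomputable def bet (α : ℝ) (d : ℕ) : ℝ := 1/(d:ℝ) + α/(d:ℝ)^2
noncomputable def Tf (α : ℝ) (d : ℕ) : ℝ := poissonTail (bet α d) 2
noncomputable def Pf (α : ℝ) (d : ℕ) : ℝ := poissonProb (bet α d) 2
noncomputable def Lf (α : ℝ) (d : ℕ) : ℝ := Real.log (1 - Tf α d)
noncomputable def uf (α : ℝ) (d : ℕ) : ℝ := ((d:ℝ) - 1) * Lf α d
noncomputable def vf (α : ℝ) (d : ℕ) : ℝ := ((d:ℝ) - 1) * Tf α d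
noncomputable def wf (α : ℝ) (d : ℕ) : ℝ := -(vf α d + uf α d)

variable {α : ℝ}

lemma ncast_pos {d : ℕ} (hd : 1 ≤ d) : (0:ℝ) < (d:ℝ) := by exact_mod_cast hd

lemma bet_pos (hα0 : 0 ≤ α) {d : ℕ} (hd : 1 ≤ d) : 0 < bet α d := by
  have h0 : (0:ℝ) < (d:ℝ) := ncast_pos hd
  have h1 : 0 < 1/(d:ℝ) := by positivity
  have h2 : 0 ≤ α/(d:ℝ)^2 := by positivity
  unfold bet; linarith

lemma tendsto_one_div_nat : Filter.Tendsto (fun d : ℕ => 1/(d:ℝ)) atTop (𝓝 0) :=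
  tendsto_one_div_atTop_nhds_zero_nat

lemma bet_tendsto_zero : Filter.Tendsto (bet α) atTop (𝓝 0) := by
  have h2 : Filter.Tendsto (fun d : ℕ => α * (1/(d:ℝ) * (1/(d:ℝ)))) atTop (𝓝 (α * (0*0))) :=
    ((tendsto_one_div_nat.mul tendsto_one_div_nat).const_mul α)
  have he : (fun d : ℕ => α * (1/(d:ℝ) * (1/(d:ℝ)))) = fun d : ℕ => α/(d:ℝ)^2 := by
    funext d; rw [sq]; field_simp
  rw [he] at h2
  have h3 := tendsto_one_div_nat.add h2
  unfold bet
  simpa using h3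

lemma bet_mem (hα0 : 0 ≤ α) : Filter.Tendsto (bet α) atTop (𝓝[≠] 0) := by
  rw [tendsto_nhdsWithin_iff]
  refine ⟨bet_tendsto_zero, ?_⟩
  filter_upwards [eventually_ge_atTop 1] with d hd
  exact (bet_pos hα0 hd).ne'

lemma dbet_tendsto (hα0 : 0 ≤ α) :
    Filter.Tendsto (fun d : ℕ => (d:ℝ) * bet α d) atTop (𝓝 1) := by
  have h2 : Filter.Tendsto (fun d : ℕ => 1 + α * (1/(d:ℝ))) atTop (𝓝 (1 + α * 0)) :=
    tendsto_const_nhds.add (tendsto_one_div_nat.const_mul α)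
  apply Filter.Tendsto.congr' _ (by simpa using h2)
  filter_upwards [eventually_ge_atTop 1] with d hd
  have h0 : (d:ℝ) ≠ 0 := (ncast_pos hd).ne'
  unfold bet; field_simp

lemma Tf_eq (d : ℕ) : Tf α d = Real.exp (-(bet α d)) * (Real.exp (bet α d) - 1 - bet α d) :=
  poissonTail_two _

lemma Tf_pos (hα0 : 0 ≤ α) {d : ℕ} (hd : 1 ≤ d) : 0 < Tf α d := by
  rw [Tf_eq]
  have hb := bet_pos hα0 hd
  have h1 : bet α d + 1 < Real.exp (bet α d) := Real.add_one_lt_exp hb.ne'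
  have h2 : 0 < Real.exp (-(bet α d)) := Real.exp_pos _
  nlinarith

lemma Tf_lt_one (hα0 : 0 ≤ α) {d : ℕ} (hd : 1 ≤ d) : Tf α d < 1 := by
  rw [Tf_eq]
  have hb := bet_pos hα0 hd
  have h2 : 0 < Real.exp (-(bet α d)) := Real.exp_pos _
  have h3 : Real.exp (-(bet α d)) * Real.exp (bet α d) = 1 := by
    rw [← Real.exp_add]; simp
  nlinarith

lemma exp_neg_bet_tendsto : Filter.Tendsto (fun d : ℕ => Real.exp (-(bet α d))) atTop (𝓝 1) := by
  have h : Filter.Tendsto (fun x : ℝ => Real.exp (-x)) (𝓝 0) (𝓝 (Real.exp (-0))) :=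
    (Real.continuous_exp.comp continuous_neg).tendsto 0
  have := h.comp (bet_tendsto_zero (α := α))
  simpa [Function.comp_def] using this

lemma d2T (hα0 : 0 ≤ α) :
    Filter.Tendsto (fun d : ℕ => (d:ℝ)^2 * Tf α d) atTop (𝓝 (1/2)) := by
  have h := ((exp_neg_bet_tendsto (α := α)).mul (E4.comp (bet_mem hα0))).mul
    ((dbet_tendsto hα0).pow 2)
  have hval : ((1:ℝ) * (1/2) * 1^2 : ℝ) = 1/2 := by norm_num
  rw [hval] at h
  refine Filter.Tendsto.congr' ?_ h
  filter_upwards [eventually_ge_atTop 1] with d hd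
  have h0 : (d:ℝ) ≠ 0 := (ncast_pos hd).ne'
  have hb : bet α d ≠ 0 := (bet_pos hα0 hd).ne'
  simp only [Function.comp_apply]
  rw [Tf_eq]
  field_simp

lemma Pf_eq (d : ℕ) : Pf α d = Real.exp (-(bet α d)) * (bet α d)^2 / 2 :=
  poissonProb_two _

lemma d2P (hα0 : 0 ≤ α) :
    Filter.Tendsto (fun d : ℕ => (d:ℝ)^2 * Pf α d) atTop (𝓝 (1/2)) := by
  have h := ((exp_neg_bet_tendsto (α := α)).mul ((dbet_tendsto hα0).pow 2)).div_const 2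
  have hval : ((1:ℝ) * 1^2 / 2 : ℝ) = 1/2 := by norm_num
  rw [hval] at h
  refine Filter.Tendsto.congr' ?_ h
  filter_upwards [] with d
  rw [Pf_eq]
  ring

lemma d3p3 (hα0 : 0 ≤ α) :
    Filter.Tendsto (fun d : ℕ => (d:ℝ)^3 * (Tf α d - Pf α d)) atTop (𝓝 (1/6)) := by
  have h := ((exp_neg_bet_tendsto (α := α)).mul (E5.comp (bet_mem hα0))).mul
    ((dbet_tendsto hα0).pow 3)
  have hval : ((1:ℝ) * (1/6) * 1^3 : ℝ) = 1/6 := by norm_num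
  rw [hval] at h
  refine Filter.Tendsto.congr' ?_ h
  filter_upwards [eventually_ge_atTop 1] with d hd
  have h0 : (d:ℝ) ≠ 0 := (ncast_pos hd).ne'
  have hb : bet α d ≠ 0 := (bet_pos hα0 hd).ne'
  simp only [Function.comp_apply]
  rw [Tf_eq, Pf_eq]
  field_simp

lemma Tf_tendsto_zero (hα0 : 0 ≤ α) : Filter.Tendsto (Tf α) atTop (𝓝 0) := by
  have hc : Filter.Tendsto (fun x : ℝ => Real.exp (-x) * (Real.exp x - 1 - x)) (𝓝 0)
      (𝓝 (Real.exp (-0) * (Real.exp 0 - 1 - 0))) := by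
    exact ((Real.continuous_exp.comp continuous_neg).mul
      ((Real.continuous_exp.sub continuous_const).sub continuous_id)).tendsto 0
  have h := hc.comp (bet_tendsto_zero (α := α))
  simp only [Real.exp_zero, neg_zero] at h
  norm_num at h
  refine Filter.Tendsto.congr' ?_ h
  filter_upwards [] with d
  simp only [Function.comp_apply]
  rw [Tf_eq]

lemma Tf_mem (hα0 : 0 ≤ α) : Filter.Tendsto (Tf α) atTop (𝓝[≠] 0) := by
  rw [tendsto_nhdsWithin_iff]
  refine ⟨Tf_tendsto_zero hα0, ?_⟩
  filter_upwards [eventually_ge_atTop 1] with d hd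
  exact (Tf_pos hα0 hd).ne'

lemma d2L (hα0 : 0 ≤ α) :
    Filter.Tendsto (fun d : ℕ => (d:ℝ)^2 * Lf α d) atTop (𝓝 (-(1/2))) := by
  have h := (E2.comp (Tf_mem hα0)).mul (d2T hα0)
  have hval : ((-1:ℝ) * (1/2) : ℝ) = -(1/2) := by norm_num
  rw [hval] at h
  refine Filter.Tendsto.congr' ?_ h
  filter_upwards [eventually_ge_atTop 1] with d hd
  have hT : Tf α d ≠ 0 := (Tf_pos hα0 hd).ne'
  simp only [Function.comp_apply]
  unfold Lf
  field_simp

lemma dm1_div_d2 : Filter.Tendsto (fun d : ℕ => ((d:ℝ)-1)/(d:ℝ)^2) atTop (𝓝 0) := by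
  have h := tendsto_one_div_nat.sub (tendsto_one_div_nat.mul tendsto_one_div_nat)
  norm_num at h
  refine Filter.Tendsto.congr' ?_ h
  filter_upwards [eventually_ge_atTop 1] with d hd
  have h0 : (d:ℝ) ≠ 0 := (ncast_pos hd).ne'
  rw [sub_div, sq, div_mul_eq_div_div, div_self h0, one_div, one_div, mul_inv]

lemma dm1_div_d : Filter.Tendsto (fun d : ℕ => ((d:ℝ)-1)/(d:ℝ)) atTop (𝓝 1) := by
  have h := (tendsto_const_nhds (x := (1:ℝ))).sub tendsto_one_div_nat
  norm_num at h
  refine Filter.Tendsto.congr' ?_ h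
  filter_upwards [eventually_ge_atTop 1] with d hd
  have h0 : (d:ℝ) ≠ 0 := (ncast_pos hd).ne'
  rw [sub_div, div_self h0, one_div]

lemma u0 (hα0 : 0 ≤ α) : Filter.Tendsto (uf α) atTop (𝓝 0) := by
  have h := (d2L hα0).mul dm1_div_d2
  norm_num at h
  refine Filter.Tendsto.congr' ?_ h
  filter_upwards [eventually_ge_atTop 1] with d hd
  have h0 : (d:ℝ) ≠ 0 := (ncast_pos hd).ne'
  unfold uf
  field_simp

lemma du (hα0 : 0 ≤ α) :
    Filter.Tendsto (fun d : ℕ => (d:ℝ) * uf α d) atTop (𝓝 (-(1/2))) := by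
  have h := (d2L hα0).mul dm1_div_d
  have hval : (-(1/2) * 1 : ℝ) = -(1/2) := by norm_num
  rw [hval] at h
  refine Filter.Tendsto.congr' ?_ h
  filter_upwards [eventually_ge_atTop 1] with d hd
  have h0 : (d:ℝ) ≠ 0 := (ncast_pos hd).ne'
  unfold uf
  field_simp

lemma Lf_neg (hα0 : 0 ≤ α) {d : ℕ} (hd : 1 ≤ d) : Lf α d < 0 := by
  unfold Lf
  apply Real.log_neg
  · linarith [Tf_lt_one hα0 hd]
  · linarith [Tf_pos hα0 hd]

lemma uf_neg (hα0 : 0 ≤ α) {d : ℕ} (hd : 2 ≤ d) : uf α d < 0 := by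
  have h1 : (1:ℝ) < (d:ℝ) := by exact_mod_cast hd
  have := Lf_neg hα0 (le_trans one_le_two hd)
  unfold uf
  nlinarith

lemma uf_mem (hα0 : 0 ≤ α) : Filter.Tendsto (uf α) atTop (𝓝[≠] 0) := by
  rw [tendsto_nhdsWithin_iff]
  refine ⟨u0 hα0, ?_⟩
  filter_upwards [eventually_ge_atTop 2] with d hd
  exact (uf_neg hα0 hd).ne

lemma expu_tendsto (hα0 : 0 ≤ α) :
    Filter.Tendsto (fun d : ℕ => Real.exp (uf α d)) atTop (𝓝 1) := by
  have h := (Real.continuous_exp.tendsto 0).comp (u0 hα0)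
  simpa [Function.comp_def] using h

lemma B6 (hα0 : 0 ≤ α) :
    Filter.Tendsto (fun d : ℕ => (d:ℝ) * (1 - Real.exp (uf α d))) atTop (𝓝 (1/2)) := by
  have h := ((du hα0).mul (E1.comp (uf_mem hα0))).neg
  have hval : (-((-(1/2)) * 1) : ℝ) = 1/2 := by norm_num
  rw [hval] at h
  refine Filter.Tendsto.congr' ?_ h
  filter_upwards [eventually_ge_atTop 2] with d hd
  have hu : uf α d ≠ 0 := (uf_neg hα0 hd).ne
  simp only [Function.comp_apply]
  field_simp
  ring

lemma v0 (hα0 : 0 ≤ α) : Filter.Tendsto (vf α) atTop (𝓝 0) := by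
  have h := (d2T hα0).mul dm1_div_d2
  norm_num at h
  refine Filter.Tendsto.congr' ?_ h
  filter_upwards [eventually_ge_atTop 1] with d hd
  have h0 : (d:ℝ) ≠ 0 := (ncast_pos hd).ne'
  unfold vf
  field_simp

lemma dv (hα0 : 0 ≤ α) :
    Filter.Tendsto (fun d : ℕ => (d:ℝ) * vf α d) atTop (𝓝 (1/2)) := by
  have h := (d2T hα0).mul dm1_div_d
  have hval : ((1/2) * 1 : ℝ) = 1/2 := by norm_num
  rw [hval] at h
  refine Filter.Tendsto.congr' ?_ h
  filter_upwards [eventually_ge_atTop 1] with d hd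
  have h0 : (d:ℝ) ≠ 0 := (ncast_pos hd).ne'
  unfold vf
  field_simp

lemma vf_pos (hα0 : 0 ≤ α) {d : ℕ} (hd : 2 ≤ d) : 0 < vf α d := by
  have h1 : (1:ℝ) < (d:ℝ) := by exact_mod_cast hd
  have := Tf_pos hα0 (le_trans one_le_two hd)
  unfold vf
  nlinarith

lemma vf_mem (hα0 : 0 ≤ α) : Filter.Tendsto (vf α) atTop (𝓝[≠] 0) := by
  rw [tendsto_nhdsWithin_iff]
  refine ⟨v0 hα0, ?_⟩
  filter_upwards [eventually_ge_atTop 2] with d hd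
  exact (vf_pos hα0 hd).ne'

lemma termA (hα0 : 0 ≤ α) :
    Filter.Tendsto (fun d : ℕ => (d:ℝ)^2 * (1 - (1 + vf α d) * Real.exp (-(vf α d))))
      atTop (𝓝 (1/8)) := by
  have h := (E6.comp (vf_mem hα0)).mul ((dv hα0).pow 2)
  have hval : ((1/2) * (1/2)^2 : ℝ) = 1/8 := by norm_num
  rw [hval] at h
  refine Filter.Tendsto.congr' ?_ h
  filter_upwards [eventually_ge_atTop 2] with d hd
  have hv : vf α d ≠ 0 := (vf_pos hα0 hd).ne'
  simp only [Function.comp_apply]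
  field_simp

lemma d2w (hα0 : 0 ≤ α) :
    Filter.Tendsto (fun d : ℕ => (d:ℝ)^2 * wf α d) atTop (𝓝 0) := by
  have h := (((E3.comp (Tf_mem hα0)).mul ((d2T hα0).pow 2)).mul dm1_div_d2).neg
  norm_num at h
  refine Filter.Tendsto.congr' ?_ h
  filter_upwards [eventually_ge_atTop 1] with d hd
  have h0 : (d:ℝ) ≠ 0 := (ncast_pos hd).ne'
  have hT : Tf α d ≠ 0 := (Tf_pos hα0 hd).ne'
  unfold wf vf uf Lf
  field_simp

lemma w0 (hα0 : 0 ≤ α) : Filter.Tendsto (wf α) atTop (𝓝 0) := by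
  have h := ((d2w hα0).mul (tendsto_one_div_nat.mul tendsto_one_div_nat))
  norm_num at h
  refine Filter.Tendsto.congr' ?_ h
  filter_upwards [eventually_ge_atTop 1] with d hd
  have h0 : (d:ℝ) ≠ 0 := (ncast_pos hd).ne'
  field_simp

lemma wf_pos (hα0 : 0 ≤ α) {d : ℕ} (hd : 2 ≤ d) : 0 < wf α d := by
  have h1 : (1:ℝ) < (d:ℝ) := by exact_mod_cast hd
  have hd1 : (1:ℕ) ≤ d := le_trans one_le_two hd
  have hT := Tf_pos hα0 hd1
  have hT1 := Tf_lt_one hα0 hd1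
  have hlog : Real.log (1 - Tf α d) < (1 - Tf α d) - 1 := by
    apply Real.log_lt_sub_one_of_pos (by linarith)
    intro hcontra
    nlinarith [hT]
  unfold wf vf uf Lf
  nlinarith

lemma wf_mem (hα0 : 0 ≤ α) : Filter.Tendsto (wf α) atTop (𝓝[≠] 0) := by
  rw [tendsto_nhdsWithin_iff]
  refine ⟨w0 hα0, ?_⟩
  filter_upwards [eventually_ge_atTop 2] with d hd
  exact (wf_pos hα0 hd).ne'

lemma termB (hα0 : 0 ≤ α) :
    Filter.Tendsto (fun d : ℕ => (d:ℝ)^2 * (Real.exp (wf α d) - 1)) atTop (𝓝 0) := by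
  have h := (E1.comp (wf_mem hα0)).mul (d2w hα0)
  norm_num at h
  refine Filter.Tendsto.congr' ?_ h
  filter_upwards [eventually_ge_atTop 2] with d hd
  have hw : wf α d ≠ 0 := (wf_pos hα0 hd).ne'
  field_simp

lemma pow_exp_u (hα0 : 0 ≤ α) {d : ℕ} (hd : 1 ≤ d) :
    (1 - Tf α d) ^ (d - 1) = Real.exp (uf α d) := by
  have hT1 : 0 < 1 - Tf α d := by linarith [Tf_lt_one hα0 hd]
  have hu : uf α d = ((d - 1 : ℕ) : ℝ) * Lf α d := by
    unfold uf; congr 1; push_cast [Nat.cast_sub hd]; ring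
  rw [hu, Real.exp_nat_mul]
  unfold Lf
  rw [Real.exp_log hT1]

lemma hnum_lim (hα0 : 0 ≤ α) :
    Filter.Tendsto (fun d : ℕ => (d:ℝ)^2 * numA' α d) atTop (𝓝 (5/12)) := by
  have h := (d3p3 hα0).add ((d2P hα0).mul (B6 hα0))
  have hval : ((1/6 : ℝ) + (1/2) * (1/2)) = 5/12 := by norm_num
  rw [hval] at h
  refine Filter.Tendsto.congr' ?_ h
  filter_upwards [eventually_ge_atTop 2] with d hd
  have hd1 : 1 ≤ d := le_trans one_le_two hd
  have hnum_eq : numA' α d = (d:ℝ) * Tf α d - (d:ℝ) * Pf α d * Real.exp (uf α d) := by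
    rw [← pow_exp_u hα0 hd1]; rfl
  rw [hnum_eq]; ring

lemma hden_lim (hα0 : 0 ≤ α) :
    Filter.Tendsto (fun d : ℕ => (d:ℝ)^2 * denA' α d) atTop (𝓝 (7/24)) := by
  have h1v : Filter.Tendsto (fun d : ℕ => 1 + vf α d) atTop (𝓝 1) := by
    have := (tendsto_const_nhds (x := (1:ℝ))).add (v0 hα0)
    norm_num at this
    exact this
  have h := ((termA hα0).add ((h1v.mul (expu_tendsto hα0)).mul (termB hα0))).add
    ((d3p3 hα0).mul (expu_tendsto hα0))
  have hval : ((1/8 : ℝ) + 1 * 1 * 0 + (1/6) * 1) = 7/24 := by norm_num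
  rw [hval] at h
  refine Filter.Tendsto.congr' ?_ h
  filter_upwards [eventually_ge_atTop 2] with d hd
  have hd1 : 1 ≤ d := le_trans one_le_two hd
  have hdpos : 0 < d := hd1
  have hden_eq : denA' α d = 1 - (1 - Tf α d)^d - (d:ℝ) * Pf α d * Real.exp (uf α d) := by
    rw [← pow_exp_u hα0 hd1]; rfl
  have hpow_d : (1 - Tf α d)^d = Real.exp (uf α d) * (1 - Tf α d) := by
    rw [← pow_exp_u hα0 hd1, ← pow_succ]
    congr 1
    omega
  have hac : Real.exp (uf α d) * Real.exp (wf α d) = Real.exp (-(vf α d)) := by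
    rw [← Real.exp_add]; congr 1; unfold wf; ring
  rw [hden_eq, hpow_d]
  have hv : vf α d = ((d:ℝ) - 1) * Tf α d := rfl
  linear_combination ((d:ℝ)^2 * (1 + vf α d)) * hac
    - ((d:ℝ)^2 * Real.exp (uf α d)) * hv


/-- Fix `A > 0` and `α ∈ [0, A]`, and for each integer `d ≥ 2` set
`β_d = 1/d + α/d²`.  Then the ratio
`(d·p_{≥2}(β_d) − d·p₂(β_d)(1 − p_{≥2}(β_d))^{d−1}) /
 (1 − (1 − p_{≥2}(β_d))^d − d·p₂(β_d)(1 − p_{≥2}(β_d))^{d−1})`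
converges to `10/7` as `d → ∞`; in particular it is at most `2` for all large `d`. -/
theorem ratio_A_prime_tendsto (A : ℝ) (hA : 0 < A) (α : ℝ) (hα : α ∈ Set.Icc (0 : ℝ) A) :
    Filter.Tendsto (fun d : ℕ => numA' α d / denA' α d) Filter.atTop (nhds (10 / 7)) ∧
      ∃ d₀ : ℕ, 2 ≤ d₀ ∧ ∀ d : ℕ, d₀ ≤ d → numA' α d / denA' α d ≤ 2 := by
  have hα0 : 0 ≤ α := hα.1
  have hdiv := (hnum_lim hα0).div (hden_lim hα0) (by norm_num : (7:ℝ)/24 ≠ 0)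
  have hval : ((5:ℝ)/12) / (7/24) = 10/7 := by norm_num
  rw [hval] at hdiv
  have hmain : Filter.Tendsto (fun d : ℕ => numA' α d / denA' α d) Filter.atTop (𝓝 (10/7)) := by
    refine Filter.Tendsto.congr' ?_ hdiv
    filter_upwards [eventually_ge_atTop 1] with d hd
    have h0 : ((d:ℝ)^2) ≠ 0 := pow_ne_zero 2 (ncast_pos hd).ne'
    exact mul_div_mul_left _ _ h0
  refine ⟨hmain, ?_⟩
  have hle : ∀ᶠ d : ℕ in atTop, numA' α d / denA' α d ≤ 2 := by
    have : ∀ᶠ x : ℝ in 𝓝 (10/7 : ℝ), x ≤ 2 := eventually_le_nhds (by norm_num)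
    exact hmain.eventually this
  obtain ⟨N, hN⟩ := eventually_atTop.mp hle
  exact ⟨max N 2, le_max_right _ _, fun d hd => hN d (le_trans (le_max_left _ _) hd)⟩
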